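/- Let G be a group acting transitively on finite nonempty sets T and U. Then the product #Aut_G(T) · #U divides the product φ_T(U) · #T, where φ_T(U) is the number of G-maps from T to U and Aut_G(T) is the (finite) group of bijective G-maps T → T. (Equivalently, φ_T(T) divides φ_T(U)·(#T/#U).) -/

import Mathlib

open MulAction

section Aux

variable {G T U : Type*} [Group G] [MulAction G T] [MulAction G U]

private lemma stab_smul_le {a : T} {b : U} (g : G)
    (h : stabilizer G a ≤ stabilizer G b) :
    stabilizer G (g • a) ≤ stabilizer G (g • b) := by
  intro x hx
  have hx' : g⁻¹ * x * g ∈ stabilizer G a := by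
    have : (g⁻¹ * x * g) • a = a := by
      rw [mul_smul, mul_smul, hx, inv_smul_smul]
    exact this
  have hb : (g⁻¹ * x * g) • b = b := h hx'
  show x • g • b = g • b
  have := congrArg (g • ·) hb
  simpa [smul_smul, mul_assoc] using this

private lemma stab_smul_le_iff (a : T) (b : U) (g : G) :
    stabilizer G (g • a) ≤ stabilizer G (g • b) ↔ stabilizer G a ≤ stabilizer G b := by
  constructor
  · intro h
    have := stab_smul_le (a := g • a) (b := g • b) g⁻¹ h
    simpa using this
  · exact stab_smul_le g

/-- G-maps T → U correspond to points of U whose stabilizer contains that of `t₀`. -/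
private noncomputable def homEquiv [IsPretransitive G T] (t₀ : T) :
    {f : T → U // ∀ (g : G) (t : T), f (g • t) = g • f t} ≃
      {u : U // stabilizer G t₀ ≤ stabilizer G u} := by
  apply Equiv.ofBijective
    (fun f => ⟨f.1 t₀, by
      intro h hh
      have : f.1 (h • t₀) = h • f.1 t₀ := f.2 h t₀
      rw [mem_stabilizer_iff] at hh ⊢
      rw [← this, hh]⟩)
  constructor
  · rintro ⟨f, hf⟩ ⟨f', hf'⟩ h
    have h0 : f t₀ = f' t₀ := congrArg Subtype.val h
    apply Subtype.ext
    funext t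
    obtain ⟨g, hg⟩ := exists_smul_eq G t₀ t
    show f t = f' t
    rw [← hg, hf, hf', h0]
  · rintro ⟨u, hu⟩
    have hsel : ∀ t : T, ∃ g : G, g • t₀ = t := fun t => exists_smul_eq G t₀ t
    choose sel hsel using hsel
    refine ⟨⟨fun t => sel t • u, ?_⟩, ?_⟩
    · intro a t
      have key : (a * sel t)⁻¹ * sel (a • t) ∈ stabilizer G t₀ := by
        show ((a * sel t)⁻¹ * sel (a • t)) • t₀ = t₀
        have h1 : sel (a • t) • t₀ = (a * sel t) • t₀ := by
          rw [hsel, mul_smul, hsel]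
        rw [mul_smul, h1, inv_smul_smul]
      have := hu key
      rw [mem_stabilizer_iff] at this
      calc sel (a • t) • u = ((a * sel t) * ((a * sel t)⁻¹ * sel (a • t))) • u := by
            rw [mul_inv_cancel_left]
        _ = (a * sel t) • ((a * sel t)⁻¹ * sel (a • t)) • u := by rw [mul_smul]
        _ = (a * sel t) • u := by rw [this]
        _ = a • sel t • u := by rw [mul_smul]
    · apply Subtype.ext
      show sel t₀ • u = u
      have : sel t₀ ∈ stabilizer G t₀ := hsel t₀
      exact hu this

/-- every G-map from a finite transitive G-set to itself is bijective. -/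
private noncomputable def autEquivHom [Finite T] [IsPretransitive G T] [Nonempty T] :
    {e : T ≃ T // ∀ (g : G) (t : T), e (g • t) = g • e t} ≃
      {f : T → T // ∀ (g : G) (t : T), f (g • t) = g • f t} := by
  apply Equiv.ofBijective (fun e => ⟨⇑e.1, e.2⟩)
  constructor
  · rintro ⟨e, he⟩ ⟨e', he'⟩ h
    have : ⇑e = ⇑e' := congrArg Subtype.val h
    exact Subtype.ext (Equiv.coe_fn_injective this)
  · rintro ⟨f, hf⟩
    obtain ⟨t₀⟩ := ‹Nonempty T›
    have hsurj : Function.Surjective f := by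
      intro x
      obtain ⟨g, hg⟩ := exists_smul_eq G (f t₀) x
      exact ⟨g • t₀, by rw [hf, hg]⟩
    have hbij : Function.Bijective f :=
      ⟨(Finite.injective_iff_surjective).2 hsurj, hsurj⟩
    exact ⟨⟨Equiv.ofBijective f hbij, hf⟩, rfl⟩

private lemma stab_le_iff_eq [Fintype T] [Nonempty T] [IsPretransitive G T] (a b : T) :
    stabilizer G a ≤ stabilizer G b ↔ stabilizer G a = stabilizer G b := by
  constructor
  · intro h
    have hi : (stabilizer G a).index = (stabilizer G b).index := by
      rw [index_stabilizer_of_transitive, index_stabilizer_of_transitive]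
    have h0 : (stabilizer G b).index ≠ 0 := by
      rw [index_stabilizer_of_transitive, Nat.card_eq_fintype_card]
      exact Fintype.card_ne_zero
    have hrel : (stabilizer G a).relIndex (stabilizer G b) = 1 := by
      have := Subgroup.relIndex_mul_index h
      rw [hi] at this
      apply Nat.eq_of_mul_eq_mul_right (Nat.pos_of_ne_zero h0)
      rw [one_mul, this]
    exact le_antisymm h (Subgroup.relIndex_eq_one.1 hrel)
  · exact fun h => h.le

end Aux

/-- Let G be a group acting transitively on finite nonempty sets T and U. Then
#Aut_G(T) · #U divides φ_T(U) · #T, where φ_T(U) is the number of G-maps T → U and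
Aut_G(T) is the group of bijective G-maps T → T. -/
theorem card_autGSet_mul_card_dvd
    {G T U : Type*} [Group G] [MulAction G T] [MulAction G U]
    [Fintype T] [Fintype U] [Nonempty T] [Nonempty U]
    [MulAction.IsPretransitive G T] [MulAction.IsPretransitive G U] :
    Nat.card {e : T ≃ T // ∀ (g : G) (t : T), e (g • t) = g • e t} * Fintype.card U ∣
      Nat.card {f : T → U // ∀ (g : G) (t : T), f (g • t) = g • f t} * Fintype.card T := by
  classical
  obtain ⟨t₀⟩ := ‹Nonempty T›
  obtain ⟨u₀⟩ := ‹Nonempty U›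
  -- m = #Aut_G(T)
  set m := Fintype.card {t : T // stabilizer G t₀ ≤ stabilizer G t} with hm
  -- c = φ_T(U)
  set c := Fintype.card {u : U // stabilizer G t₀ ≤ stabilizer G u} with hc
  -- d = size of {t | stab t ≤ stab u₀}
  set d := Fintype.card {t : T // stabilizer G t ≤ stabilizer G u₀} with hd
  -- identify the two Nat.cards
  have hAut : Nat.card {e : T ≃ T // ∀ (g : G) (t : T), e (g • t) = g • e t} = m := by
    rw [Nat.card_congr ((autEquivHom (G := G) (T := T)).trans (homEquiv t₀)),
      Nat.card_eq_fintype_card]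
  have hHom : Nat.card {f : T → U // ∀ (g : G) (t : T), f (g • t) = g • f t} = c := by
    rw [Nat.card_congr (homEquiv t₀), Nat.card_eq_fintype_card]
  rw [hAut, hHom]
  -- constancy of fibers over T
  have hconstT : ∀ t : T, Fintype.card {u : U // stabilizer G t ≤ stabilizer G u} = c := by
    intro t
    obtain ⟨g, hg⟩ := exists_smul_eq G t₀ t
    rw [hc]
    apply Fintype.card_congr
    exact ((MulAction.toPerm g).subtypeEquiv (fun u => by
      rw [← hg]; exact (stab_smul_le_iff t₀ u g).symm)).symm
  -- constancy of fibers over U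
  have hconstU : ∀ u : U, Fintype.card {t : T // stabilizer G t ≤ stabilizer G u} = d := by
    intro u
    obtain ⟨g, hg⟩ := exists_smul_eq G u₀ u
    rw [hd]
    apply Fintype.card_congr
    refine ((MulAction.toPerm g).subtypeEquiv (fun t => ?_)).symm
    show stabilizer G t ≤ stabilizer G u₀ ↔ stabilizer G (g • t) ≤ stabilizer G u
    rw [← hg]
    exact (stab_smul_le_iff t u₀ g).symm
  -- constancy of "same stabilizer" classes in T
  have hconstTT : ∀ t : T, Fintype.card {t' : T // stabilizer G t ≤ stabilizer G t'} = m := by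
    intro t
    obtain ⟨g, hg⟩ := exists_smul_eq G t₀ t
    rw [hm]
    apply Fintype.card_congr
    exact ((MulAction.toPerm g).subtypeEquiv (fun t' => by
      rw [← hg]; exact (stab_smul_le_iff t₀ t' g).symm)).symm
  -- double counting
  have hdouble : Fintype.card T * c = Fintype.card U * d := by
    have e1 : {p : T × U // stabilizer G p.1 ≤ stabilizer G p.2} ≃
        Σ t : T, {u : U // stabilizer G t ≤ stabilizer G u} :=
      Equiv.subtypeProdEquivSigmaSubtype (fun (t : T) (u : U) =>
        stabilizer G t ≤ stabilizer G u)
    have e2 : {p : T × U // stabilizer G p.1 ≤ stabilizer G p.2} ≃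
        Σ u : U, {t : T // stabilizer G t ≤ stabilizer G u} :=
      ((Equiv.prodComm T U).subtypeEquiv (fun p => Iff.rfl)).trans
        (Equiv.subtypeProdEquivSigmaSubtype (fun (u : U) (t : T) =>
          stabilizer G t ≤ stabilizer G u))
    have h1 : Fintype.card {p : T × U // stabilizer G p.1 ≤ stabilizer G p.2} =
        Fintype.card T * c := by
      rw [Fintype.card_congr e1, Fintype.card_sigma]
      simp [hconstT, Finset.sum_const, Finset.card_univ]
    have h2 : Fintype.card {p : T × U // stabilizer G p.1 ≤ stabilizer G p.2} =
        Fintype.card U * d := by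
      rw [Fintype.card_congr e2, Fintype.card_sigma]
      simp [hconstU, Finset.sum_const, Finset.card_univ]
    rw [← h1, h2]
  -- m divides d
  have hmd : m ∣ d := by
    have hd' : d = (Finset.univ.filter
        (fun t : T => stabilizer G t ≤ stabilizer G u₀)).card := by
      rw [hd, Fintype.card_subtype]
    set s : Finset T := Finset.univ.filter (fun t : T => stabilizer G t ≤ stabilizer G u₀)
      with hs
    have := Finset.card_eq_sum_card_image (fun t : T => stabilizer G t) s
    have hfiber : ∀ K ∈ s.image (fun t : T => stabilizer G t),
        (s.filter (fun t => stabilizer G t = K)).card = m := by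
      intro K hK
      obtain ⟨t₁, ht₁, rfl⟩ := Finset.mem_image.1 hK
      have ht₁' : stabilizer G t₁ ≤ stabilizer G u₀ := by
        simpa [hs] using ht₁
      have : (s.filter (fun t => stabilizer G t = stabilizer G t₁)) =
          Finset.univ.filter (fun t => stabilizer G t₁ ≤ stabilizer G t) := by
        ext t
        simp only [hs, Finset.mem_filter, Finset.mem_univ, true_and]
        constructor
        · rintro ⟨-, h⟩; exact h.ge
        · intro h
          have heq := (stab_le_iff_eq t₁ t).1 h
          exact ⟨heq ▸ ht₁', heq.symm⟩
      rw [this, ← Fintype.card_subtype, hconstTT]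
    rw [hd', this, Finset.sum_congr rfl hfiber, Finset.sum_const, smul_eq_mul]
    exact Dvd.intro_left _ rfl
  -- conclude
  rw [mul_comm c (Fintype.card T), hdouble]
  rw [mul_comm m (Fintype.card U)]
  exact mul_dvd_mul_left _ hmd
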